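/- Let Y be an aperiodic SFT over alphabet A, let S : A → {0,1}^({0,…,k−1}²) be an injective encoding, extended cellwise to configurations, and let σ be the substitution 0 ↦ R₀, 1 ↦ R₁ where R₀ is the m×n all-zero block and R₁ is the m×n block with a single 1 at (0,0). Then every configuration c in X = σ(S(Y)) satisfies |L_{m,n}(c)| ≤ mn + 1. -/

import Mathlib

/-- A configuration: a coloring of `ℤ²` by the alphabet `A`. -/
abbrev Config (A : Type*) := ℤ × ℤ → A

/-- Shift of a configuration by the vector `u`. -/
def shiftC {A : Type*} (u : ℤ × ℤ) (c : Config A) : Config A :=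
  fun v => c (v - u)

/-- `X` is a subshift of finite type. -/
def IsSFT {A : Type*} (X : Set (Config A)) : Prop :=
  ∃ (D : Finset (ℤ × ℤ)) (P : Set (D → A)),
    X = {c | ∀ u : ℤ × ℤ, (fun v : D => c (u + (v : ℤ × ℤ))) ∈ P}

/-- `X` is aperiodic: nonempty and containing no periodic configuration. -/
def Aperiodic {A : Type*} (X : Set (Config A)) : Prop :=
  X.Nonempty ∧ ∀ c ∈ X, ∀ u : ℤ × ℤ, u ≠ 0 → shiftC u c ≠ c

/-- Cellwise extension of a letter-to-`k×k`-block encoding `S` to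
configurations: the cell of `c` at `(i,j)` is replaced by the block `S(c_{i,j})`
with lower-left corner at `(k·i, k·j)`. -/
def encode {A : Type*} (k : ℕ) (S : A → Fin k × Fin k → Bool) (hk : 0 < k)
    (c : Config A) : Config Bool :=
  fun v =>
    S (c (v.1.fdiv k, v.2.fdiv k))
      (⟨(v.1.fmod k).toNat % k, Nat.mod_lt _ hk⟩, ⟨(v.2.fmod k).toNat % k, Nat.mod_lt _ hk⟩)

/-- The substitution `0 ↦ R₀`, `1 ↦ R₁` (where `R₀` is the all-zero `m × n`
block and `R₁` has a single `1` at `(0,0)`), applied to a binary configuration. -/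
def blowup (m n : ℕ) (d : Config Bool) : Config Bool :=
  fun v =>
    if v.1.fmod m = 0 ∧ v.2.fmod n = 0 then d (v.1.fdiv m, v.2.fdiv n)
    else false

/-- The set `L_{m,n}(c)` of `m × n` rectangular patterns appearing in `c`. -/
def langRect {A : Type*} (m n : ℕ) (c : Config A) : Set (Fin m × Fin n → A) :=
  {p | ∃ u : ℤ × ℤ, ∀ (i : Fin m) (j : Fin n),
    p (i, j) = c (u.1 + (i : ℤ), u.2 + (j : ℤ))}


lemma fmod_zero_unique (a : ℤ) (m : ℕ) (i i' : Fin m)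
    (h : (a + (i : ℤ)).fmod m = 0) (h' : (a + (i' : ℤ)).fmod m = 0) : i = i' := by
  rw [Int.fmod_eq_emod_of_nonneg _ (by positivity)] at h h'
  have d1 : (m : ℤ) ∣ (a + i) := Int.dvd_of_emod_eq_zero h
  have d2 : (m : ℤ) ∣ (a + i') := Int.dvd_of_emod_eq_zero h'
  have : (m : ℤ) ∣ ((i : ℤ) - i') := by
    have := dvd_sub d1 d2
    simpa using this
  obtain ⟨t, ht⟩ := this
  have hi : (i : ℤ) < m := by exact_mod_cast i.isLt
  have hi' : (i' : ℤ) < m := by exact_mod_cast i'.isLt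
  have : (i : ℤ) = i' := by
    have h0 : (0:ℤ) ≤ i := by positivity
    have h0' : (0:ℤ) ≤ i' := by positivity
    rcases lt_trichotomy t 0 with ht0 | ht0 | ht0
    · nlinarith
    · rw [ht0, mul_zero] at ht; omega
    · nlinarith
  exact Fin.ext (by exact_mod_cast this)

lemma blowup_lang_le (m n : ℕ) (d : Config Bool) :
    (langRect m n (blowup m n d)).ncard ≤ m * n + 1 := by
  set c := blowup m n d
  have huniq : ∀ p ∈ langRect m n c, ∀ x y : Fin m × Fin n,
      p x = true → p y = true → x = y := by
    rintro p ⟨u, hu⟩ ⟨i, j⟩ ⟨i', j'⟩ hx hy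
    rw [hu i j] at hx
    rw [hu i' j'] at hy
    simp only [c, blowup] at hx hy
    by_cases h1 : (u.1 + (i:ℤ)).fmod m = 0 ∧ (u.2 + (j:ℤ)).fmod n = 0
    · by_cases h2 : (u.1 + (i':ℤ)).fmod m = 0 ∧ (u.2 + (j':ℤ)).fmod n = 0
      · exact Prod.ext (fmod_zero_unique u.1 m i i' h1.1 h2.1)
          (fmod_zero_unique u.2 n j j' h1.2 h2.2)
      · rw [if_neg h2] at hy; exact absurd hy (by simp)
    · rw [if_neg h1] at hx; exact absurd hx (by simp)
  have hsub : langRect m n c ⊆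
      insert (fun _ => false)
        ((fun x : Fin m × Fin n => fun y : Fin m × Fin n => decide (y = x)) '' Set.univ) := by
    intro p hp
    by_cases hex : ∃ x, p x = true
    · obtain ⟨x, hx⟩ := hex
      right
      refine ⟨x, Set.mem_univ _, ?_⟩
      funext y
      by_cases hyx : y = x
      · simp [hyx, hx]
      · simp only [decide_eq_false hyx]
        cases hpy : p y
        · rfl
        · exact absurd (huniq p hp y x hpy hx) hyx
    · left
      push_neg at hex
      funext y
      simpa using hex y
  calc (langRect m n c).ncard
      ≤ (insert (fun _ => false)
        ((fun x : Fin m × Fin n => fun y : Fin m × Fin n => decide (y = x)) '' Set.univ)).ncard :=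
        Set.ncard_le_ncard hsub ((Set.finite_univ.image _).insert _)
    _ ≤ ((fun x : Fin m × Fin n => fun y : Fin m × Fin n => decide (y = x)) '' Set.univ).ncard + 1 :=
        Set.ncard_insert_le _ _
    _ ≤ (Set.univ : Set (Fin m × Fin n)).ncard + 1 :=
        Nat.add_le_add_right (Set.ncard_image_le Set.finite_univ) 1
    _ = m * n + 1 := by rw [Set.ncard_univ]; simp [Nat.card_eq_fintype_card]

/-- If `Y` is an aperiodic SFT, `S` an injective `k × k` binary encoding of its
alphabet and `σ` the sparse substitution `0 ↦ R₀, 1 ↦ R₁`, then every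
configuration of `X = σ(S(Y))` satisfies `|L_{m,n}(c)| ≤ mn + 1`. -/
theorem blowup_encode_complexity_le {A : Type*} [Fintype A]
    (Y : Set (Config A)) (hSFT : IsSFT Y) (haper : Aperiodic Y)
    (k : ℕ) (hk : 0 < k) (S : A → Fin k × Fin k → Bool)
    (hS : Function.Injective S)
    (m n : ℕ) (hm : 0 < m) (hn : 0 < n) :
    ∀ c ∈ (fun y : Config A => blowup m n (encode k S hk y)) '' Y,
      (langRect m n c).ncard ≤ m * n + 1 := by
  rintro c ⟨y, -, rfl⟩
  exact blowup_lang_le m n (encode k S hk y)
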